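/- arXiv:1506.03262 — 4 statements merged into one kernel-verified Lean document; each statement's English description precedes it below -/
import Mathlib

section
/- Let S₂ be a subsequence of S₁ witnessed by a strictly increasing character-preserving map f. Fix a character x. Let B_x be the bitvector of length occ(x, S₁) whose i-th bit is 1 iff the position of the i-th occurrence of x in S₁ is not in the image of f. Then for every i with 1 ≤ i ≤ occ(x, S₂), select_x(S₁, select₀(B_x, i)) = f(select_x(S₂, i)); that is, the position in S₁ of the (select₀(B_x, i))-th occurrence of x equals the image under f of the position of the i-th occurrence of x in S₂. -/
namespace RS

variable {α : Type*} [DecidableEq α]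

/-- 1-indexed position of the `j`-th occurrence of `a` in `S` (junk value if out of range). -/
def sel (a : α) (S : List α) (j : ℕ) : ℕ :=
  (((List.range S.length).filter (fun p => decide (S[p]? = some a))).getD (j - 1) 0) + 1

/-- Number of occurrences of `a` among the first `i` characters of `S` (1-indexed). -/
def rank (a : α) (S : List α) (i : ℕ) : ℕ := (S.take i).count a

/-- Total number of occurrences of `a` in `S`. -/
def occ (a : α) (S : List α) : ℕ := S.count a

def rank0 (B : List Bool) (i : ℕ) : ℕ := (B.take i).count false
def rank1 (B : List Bool) (i : ℕ) : ℕ := (B.take i).count true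
def sel0 (B : List Bool) (i : ℕ) : ℕ := sel false B i
def sel1 (B : List Bool) (i : ℕ) : ℕ := sel true B i

/-- `f` is a strictly increasing, character-preserving embedding of `S₂` into `S₁`
(all positions 1-indexed). -/
def Emb (S₂ S₁ : List α) (f : ℕ → ℕ) : Prop :=
  (∀ j, 1 ≤ j → j ≤ S₂.length → 1 ≤ f j ∧ f j ≤ S₁.length) ∧
  (∀ j k, 1 ≤ j → j < k → k ≤ S₂.length → f j < f k) ∧
  (∀ j, 1 ≤ j → j ≤ S₂.length → S₂[j - 1]? = S₁[f j - 1]?)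

/-- Is the 1-indexed position `p` in the image `{f 1, …, f m}`? -/
def inIm (m : ℕ) (f : ℕ → ℕ) (p : ℕ) : Bool :=
  (List.range m).any (fun j => f (j + 1) == p)

/-- Bitvector of length `n` marking with `true` (`1`) the 1-indexed positions
outside the image `{f 1, …, f m}`. -/
def markB (n m : ℕ) (f : ℕ → ℕ) : List Bool :=
  (List.range n).map (fun p => !inIm m f (p + 1))

/-- Bitvector of length `occ x S` whose `i`-th bit is `true` (`1`) iff the position
of the `i`-th occurrence of `x` in `S` is outside the image `{f 1, …, f m}`. -/
def markBx (x : α) (S : List α) (m : ℕ) (f : ℕ → ℕ) : List Bool :=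
  (List.range (occ x S)).map (fun i => !inIm m f (sel x S (i + 1)))

/-- The subsequence of `S` consisting of the characters at positions outside
the image `{g 1, …, g m}`, in order. -/
def delIm (S : List α) (m : ℕ) (g : ℕ → ℕ) : List α :=
  (List.range S.length).filterMap (fun p => if inIm m g (p + 1) then none else S[p]?)

/-! ### Auxiliary definitions and lemmas -/

/-- List of 0-indexed positions of `a` in `S`. -/
def pos (a : α) (S : List α) : List ℕ :=
  (List.range S.length).filter (fun p => decide (S[p]? = some a))

lemma sel_eq_pos (a : α) (S : List α) (j : ℕ) :
    sel a S j = (pos a S).getD (j - 1) 0 + 1 := rfl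

lemma mem_pos {a : α} {S : List α} {p : ℕ} :
    p ∈ pos a S ↔ p < S.length ∧ S[p]? = some a := by
  simp [pos, List.mem_filter, List.mem_range]

lemma pos_cons (a b : α) (S : List α) :
    pos a (b :: S) = (if b = a then [0] else []) ++ (pos a S).map (· + 1) := by
  unfold pos
  rw [List.length_cons, List.range_succ_eq_map, List.filter_cons]
  simp only [List.filter_map]
  by_cases h : b = a <;>
    simp [h, Function.comp_def, Nat.succ_eq_add_one]

lemma length_pos_eq_occ (a : α) (S : List α) : (pos a S).length = occ a S := by
  induction S with
  | nil => rfl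
  | cons b S ih =>
      rw [pos_cons, occ, List.count_cons]
      by_cases h : b = a <;> simp [h, ih, occ]

lemma pos_pairwise (a : α) (S : List α) : (pos a S).Pairwise (· < ·) :=
  List.pairwise_lt_range.filter _

lemma map_range_getD {β γ : Type*} (L : List β) (d : β) (h : β → γ) :
    (List.range L.length).map (fun i => h (L.getD i d)) = L.map h := by
  apply List.ext_getElem
  · simp
  · intro n h1 h2
    simp [List.getD_eq_getElem?_getD, List.getElem?_eq_getElem (by simpa using h2)]

lemma map_filter_range_getD {β : Type*} (L : List β) (d : β) (Q : β → Bool) :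
    ((List.range L.length).filter (fun q => Q (L.getD q d))).map (fun q => L.getD q d)
      = L.filter Q := by
  induction L with
  | nil => rfl
  | cons b L ih =>
      rw [List.length_cons, List.range_succ_eq_map, List.filter_cons]
      by_cases h : Q b <;>
        simp [h, List.filter_map, List.map_map, Function.comp_def, ← ih]

lemma inIm_iff {m : ℕ} {f : ℕ → ℕ} {p : ℕ} :
    inIm m f p = true ↔ ∃ j < m, f (j + 1) = p := by
  simp [inIm, List.any_eq_true, List.mem_range]

lemma filter_pos_eq (S₁ S₂ : List α) (f : ℕ → ℕ) (hf : Emb S₂ S₁ f) (x : α) :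
    (pos x S₁).filter (fun p => inIm S₂.length f (p + 1))
      = (pos x S₂).map (fun j => f (j + 1) - 1) := by
  obtain ⟨hb, hmono, hchar⟩ := hf
  set m := S₂.length with hm
  have hsort₁ : ((pos x S₁).filter (fun p => inIm m f (p + 1))).Pairwise (· < ·) :=
    (pos_pairwise x S₁).filter _
  have hsort₂ : ((pos x S₂).map (fun j => f (j + 1) - 1)).Pairwise (· < ·) := by
    refine List.Pairwise.map _ ?_ (List.Pairwise.and_mem.1 (pos_pairwise x S₂))
    rintro j k ⟨hj, hk, hjk⟩
    have hkm : k < m := (mem_pos.1 hk).1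
    have h1 := hmono (j + 1) (k + 1) (by omega) (by omega) (by omega)
    have h2 := (hb (j + 1) (by omega) (by omega)).1
    omega
  have hmem : ∀ p, p ∈ (pos x S₁).filter (fun p => inIm m f (p + 1)) ↔
      p ∈ (pos x S₂).map (fun j => f (j + 1) - 1) := by
    intro p
    rw [List.mem_filter, List.mem_map]
    constructor
    · rintro ⟨hp, him⟩
      obtain ⟨hpn, hpx⟩ := mem_pos.1 hp
      obtain ⟨j, hjm, hfj⟩ := inIm_iff.1 him
      refine ⟨j, mem_pos.2 ⟨hjm, ?_⟩, by omega⟩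
      have := hchar (j + 1) (by omega) (by omega)
      simpa [hfj] using this.trans (by rw [show f (j+1) - 1 = p by omega]; exact hpx)
    · rintro ⟨j, hj, rfl⟩
      obtain ⟨hjm, hjx⟩ := mem_pos.1 hj
      have hb1 := hb (j + 1) (by omega) (by omega)
      have hchar1 := hchar (j + 1) (by omega) (by omega)
      simp only [Nat.add_sub_cancel] at hchar1
      refine ⟨mem_pos.2 ⟨by omega, ?_⟩, inIm_iff.2 ⟨j, hjm, by omega⟩⟩
      rw [← hchar1]; exact hjx
  have hnd₁ : ((pos x S₁).filter (fun p => inIm m f (p + 1))).Nodup :=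
    hsort₁.imp (fun h => Nat.ne_of_lt h)
  have hnd₂ : ((pos x S₂).map (fun j => f (j + 1) - 1)).Nodup :=
    hsort₂.imp (fun h => Nat.ne_of_lt h)
  have hperm : List.Perm ((pos x S₁).filter (fun p => inIm m f (p + 1)))
      ((pos x S₂).map (fun j => f (j + 1) - 1)) :=
    ((hnd₁.subperm (fun p hp => (hmem p).1 hp)).antisymm
      (hnd₂.subperm (fun p hp => (hmem p).2 hp)))
  exact List.Perm.eq_of_pairwise (fun a b _ _ h1 h2 => absurd (h1.trans h2) (lt_irrefl _)) hsort₁ hsort₂ hperm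

theorem sel_markBx_of_emb (S₁ S₂ : List α) (f : ℕ → ℕ) (hf : Emb S₂ S₁ f)
    (x : α) (i : ℕ) (hi1 : 1 ≤ i) (hi2 : i ≤ occ x S₂) :
    sel x S₁ (sel0 (markBx x S₁ S₂.length f) i) = f (sel x S₂ i) := by
  classical
  set m := S₂.length with hm
  set L₁ := pos x S₁ with hL₁
  set L₂ := pos x S₂ with hL₂
  have hBx : markBx x S₁ m f = L₁.map (fun p => !inIm m f (p + 1)) := by
    rw [markBx, ← length_pos_eq_occ, ← hL₁]
    have hsel : ∀ i : ℕ, sel x S₁ (i + 1) = L₁.getD i 0 + 1 := by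
      intro i; rw [sel_eq_pos]; simp [hL₁]
    simp only [hsel]
    exact map_range_getD L₁ 0 (fun p => !inIm m f (p + 1))
  have hJ : pos false (markBx x S₁ m f)
      = (List.range L₁.length).filter (fun q => inIm m f (L₁.getD q 0 + 1)) := by
    rw [hBx]; unfold pos
    rw [List.length_map]
    apply List.filter_congr
    intro q hq
    rw [List.mem_range] at hq
    simp [List.getElem?_map, List.getElem?_eq_getElem hq, List.getD_eq_getElem?_getD]
  set F := L₂.map (fun j => f (j + 1) - 1) with hF
  have hFeq : L₁.filter (fun p => inIm m f (p + 1)) = F := filter_pos_eq S₁ S₂ f hf x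
  set J := pos false (markBx x S₁ m f) with hJdef
  have hGm : J.map (fun q => L₁.getD q 0) = F := by
    rw [hJ, map_filter_range_getD L₁ 0 (fun p => inIm m f (p + 1)), hFeq]
  have hlenF : F.length = L₂.length := by simp [hF]
  have hlen : J.length = L₂.length := by
    have h := congrArg List.length hGm
    rw [List.length_map] at h; omega
  have hiL : i - 1 < L₂.length := by
    have h := length_pos_eq_occ x S₂
    rw [← hL₂] at h; omega
  have hiJ : i - 1 < J.length := by omega
  -- LHS
  have hsel0 : sel0 (markBx x S₁ m f) i = J[i - 1] + 1 := by
    rw [sel0, sel_eq_pos, ← hJdef, List.getD_eq_getElem?_getD,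
      List.getElem?_eq_getElem hiJ]
    rfl
  have hLHS : sel x S₁ (sel0 (markBx x S₁ m f) i) = L₁.getD (J[i - 1]) 0 + 1 := by
    rw [hsel0, sel_eq_pos]; simp [hL₁]
  have h1 : F[i - 1]? = some (L₁.getD (J[i - 1]) 0) := by
    rw [← hGm]
    simp [List.getElem?_map, List.getElem?_eq_getElem hiJ]
  have h2 : F[i - 1]? = some (f (L₂[i - 1] + 1) - 1) := by
    simp [hF, List.getElem?_map, List.getElem?_eq_getElem hiL]
  have h12 : L₁.getD (J[i - 1]) 0 = f (L₂[i - 1] + 1) - 1 := by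
    rw [h1] at h2; exact Option.some_injective _ h2
  -- RHS
  have hRHS : sel x S₂ i = L₂[i - 1] + 1 := by
    rw [sel_eq_pos, ← hL₂, List.getD_eq_getElem?_getD, List.getElem?_eq_getElem hiL]
    rfl
  have hmemL₂ : L₂[i - 1] < m := by
    have hmem' : L₂[i - 1] ∈ L₂ := List.getElem_mem hiL
    have := mem_pos.1 (by rw [← hL₂]; exact hmem')
    exact this.1
  have hge1 : 1 ≤ f (L₂[i - 1] + 1) :=
    (hf.1 (L₂[i - 1] + 1) (by omega) (by omega)).1
  rw [hLHS, hRHS, h12]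
  omega

end RS
end

section
/- (Relative select for supersequences, new-character case.) Let S₁ be a subsequence of S₂ witnessed by a strictly increasing character-preserving map g. Let D be the subsequence of S₂ consisting of the characters at positions not in im(g), taken in order. Define B of length |S₂| by B[p] = 1 iff p ∉ im(g), and for each character x define B_x of length occ(x, S₂) by B_x[i] = 1 iff the position of the i-th occurrence of x in S₂ is not in im(g). Then for every character x and every i with 1 ≤ i ≤ occ(x, S₂) such that B_x[i] = 1: select_x(S₂, i) = select₁(B, select_x(D, rank₁(B_x, i))). -/
namespace RS

variable {α : Type*} [DecidableEq α]

theorem filterA {β : Type*} (L : List β) (c : β → Bool) (d : β) :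
    ((List.range L.length).filter (fun j => c (L.getD j d))).map (fun j => L.getD j d) = L.filter c := by
  induction L with
  | nil => simp
  | cons a T ih =>
    rw [List.length_cons, List.range_succ_eq_map, List.filter_cons]
    have h1 : ((fun j => c ((a :: T).getD j d)) ∘ Nat.succ) = fun j => c (T.getD j d) := by
      funext j; simp
    have h2 : ((fun j => (a :: T).getD j d) ∘ Nat.succ) = fun j => T.getD j d := by
      funext j; simp
    rw [List.filter_map, h1, List.getD_cons_zero]
    by_cases h : c a
    · rw [if_pos h, List.map_cons, List.map_map, h2, ih, List.getD_cons_zero,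
        List.filter_cons_of_pos h]
    · rw [if_neg h, List.map_map, h2, ih, List.filter_cons_of_neg h]

theorem mapB {β γ : Type*} (L : List β) (f : β → γ) (d : β) :
    (List.range L.length).map (fun j => f (L.getD j d)) = L.map f := by
  induction L with
  | nil => simp
  | cons a T ih =>
    rw [List.length_cons, List.range_succ_eq_map, List.map_cons, List.map_map]
    have h2 : ((fun j => f ((a :: T).getD j d)) ∘ Nat.succ) = fun j => f (T.getD j d) := by
      funext j; simp
    rw [h2, ih, List.getD_cons_zero, List.map_cons]

theorem filterMapC {β γ : Type*} (l : List β) (c : β → Bool) (f : β → γ) :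
    l.filterMap (fun p => if c p then some (f p) else none) = (l.filter c).map f := by
  induction l with
  | nil => rfl
  | cons a T ih => by_cases h : c a <;> simp [List.filterMap_cons, List.filter_cons, h, ih]

theorem decide_eq_beq (a b : α) : decide (a = b) = (a == b) := by
  by_cases h : a = b <;> simp [h]

theorem relative_select_supersequence_new (S₁ S₂ : List α) (g : ℕ → ℕ)
    (hg : Emb S₁ S₂ g) (x : α) (i : ℕ) (hi1 : 1 ≤ i) (hi2 : i ≤ occ x S₂)
    (hbit : (markBx x S₂ S₁.length g)[i - 1]? = some true) :
    sel x S₂ i =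
      sel1 (markB S₂.length S₁.length g)
        (sel x (delIm S₂ S₁.length g) (rank1 (markBx x S₂ S₁.length g) i)) := by
  clear hg
  set pred : ℕ → Bool := fun p => !inIm S₁.length g (p + 1) with hpred
  set cQ : ℕ → Bool := fun p => S₂.getD p x == x with hcQ
  set Q : List ℕ := (List.range S₂.length).filter cQ with hQdef
  set P : List ℕ := (List.range S₂.length).filter pred with hPdef
  have hQ : (List.range S₂.length).filter (fun p => decide (S₂[p]? = some x)) = Q := by
    rw [hQdef]
    apply List.filter_congr
    intro p hp
    rw [List.mem_range] at hp
    simp [hcQ, List.getElem?_eq_getElem hp, List.getD_eq_getElem _ _ hp]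
    by_cases h : S₂[p] = x <;> simp [h]
  have hselS : ∀ j, sel x S₂ j = Q.getD (j - 1) 0 + 1 := by
    intro j; unfold sel; rw [hQ]
  have hocc : occ x S₂ = Q.length := by
    have hA := filterA S₂ (fun y => y == x) x
    have h2 : occ x S₂ = (S₂.filter (fun y => y == x)).length := by
      unfold occ
      rw [List.count_eq_countP, List.countP_eq_length_filter]
    rw [h2, ← hA, List.length_map, hQdef, hcQ]
  have hBx : markBx x S₂ S₁.length g = Q.map pred := by
    unfold markBx
    rw [hocc, ← mapB Q pred 0]
    apply List.map_congr_left
    intro j hj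
    rw [hselS (j + 1)]
    simp only [Nat.add_sub_cancel]
    rfl
  have hilen : i - 1 < Q.length := by omega
  set q := Q.getD (i - 1) 0 with hq
  have hqe : q = Q[i - 1]'hilen := by rw [hq, List.getD_eq_getElem]
  have hpredq : pred q = true := by
    rw [hBx, List.getElem?_map, List.getElem?_eq_getElem hilen] at hbit
    rw [hqe]
    simpa using hbit
  set k := rank1 (markBx x S₂ S₁.length g) i with hkdef
  have hk : k = ((Q.take i).filter pred).length := by
    rw [hkdef]; unfold rank1
    rw [hBx, ← List.map_take, List.count_eq_countP, List.countP_map]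
    have hc : ((fun b => b == true) ∘ pred) = pred := by funext a; simp [Function.comp]
    rw [hc, List.countP_eq_length_filter]
  have htake : Q.take i = Q.take (i - 1) ++ [q] := by
    have h : i - 1 + 1 = i := by omega
    conv_lhs => rw [← h]
    rw [List.take_succ, List.getElem?_eq_getElem hilen]
    simp [hqe]
  set R := Q.filter pred with hRdef
  have hsplit : R = (Q.take (i - 1)).filter pred ++ q :: (Q.drop i).filter pred := by
    conv_lhs => rw [hRdef, ← List.take_append_drop i Q]
    rw [List.filter_append, htake, List.filter_append]
    simp [hpredq]
  have hk1 : k = ((Q.take (i - 1)).filter pred).length + 1 := by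
    rw [hk, htake, List.filter_append]
    simp [hpredq]
  have hkl : k - 1 = ((Q.take (i - 1)).filter pred).length := by omega
  have hRk : R.getD (k - 1) 0 = q := by
    rw [hsplit, hkl]
    have hlt : ((Q.take (i - 1)).filter pred).length
        < (((Q.take (i - 1)).filter pred) ++ q :: (Q.drop i).filter pred).length := by
      simp
    rw [List.getD_eq_getElem _ _ hlt, List.getElem_append_right (le_refl _)]
    simp
  have hRlen : k - 1 < R.length := by
    rw [hsplit, List.length_append, List.length_cons]
    omega
  set D := delIm S₂ S₁.length g with hDdef
  have hD : D = P.map (fun p => S₂.getD p x) := by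
    rw [hDdef]; unfold delIm
    have h1 : ∀ p ∈ List.range S₂.length,
        (if inIm S₁.length g (p + 1) then none else S₂[p]?)
          = (if pred p then some (S₂.getD p x) else none) := by
      intro p hp; rw [List.mem_range] at hp
      by_cases h : inIm S₁.length g (p + 1)
      · simp [h, hpred]
      · simp [h, hpred, List.getElem?_eq_getElem hp, List.getD_eq_getElem _ _ hp]
    rw [List.filterMap_congr h1, filterMapC]
  have hDlen : D.length = P.length := by rw [hD, List.length_map]
  set QD := (List.range P.length).filter (fun j => cQ (P.getD j 0)) with hQDdef
  have hQD : (List.range D.length).filter (fun j => decide (D[j]? = some x)) = QD := by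
    rw [hDlen, hQDdef]
    apply List.filter_congr
    intro j hj; rw [List.mem_range] at hj
    rw [hD, List.getElem?_map, List.getElem?_eq_getElem hj, hcQ, List.getD_eq_getElem _ _ hj]
    simp [decide_eq_beq]
  have hmapQD : QD.map (fun j => P.getD j 0) = P.filter cQ := filterA P cQ 0
  have hPQ : P.filter cQ = R := by
    rw [hRdef, hQdef, hPdef, List.filter_filter, List.filter_filter]
    apply List.filter_congr
    intro p _
    rw [Bool.and_comm]
  have hQDlen : k - 1 < QD.length := by
    have hl := congrArg List.length hmapQD
    rw [List.length_map, hPQ] at hl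
    omega
  have hfinal : P.getD (QD.getD (k - 1) 0) 0 = q :=
    calc P.getD (QD.getD (k - 1) 0) 0
        = P.getD (QD[k - 1]'hQDlen) 0 := by rw [List.getD_eq_getElem _ _ hQDlen]
      _ = (QD.map (fun j => P.getD j 0))[k - 1]'(by rw [List.length_map]; exact hQDlen) := by
          rw [List.getElem_map]
      _ = R[k - 1]'(by rw [← hPQ, ← hmapQD, List.length_map]; exact hQDlen) := by
          simp only [hmapQD, hPQ]
      _ = R.getD (k - 1) 0 := (List.getD_eq_getElem _ _ hRlen).symm
      _ = q := hRk
  have hselD : sel x D k = QD.getD (k - 1) 0 + 1 := by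
    unfold sel; rw [hQD]
  set B := markB S₂.length S₁.length g with hBdef
  have hBlen : B.length = S₂.length := by
    rw [hBdef]; unfold markB; rw [List.length_map, List.length_range]
  have hBfil : (List.range B.length).filter (fun p => decide (B[p]? = some true)) = P := by
    rw [hBlen, hPdef]
    apply List.filter_congr
    intro p hp; rw [List.mem_range] at hp
    rw [hBdef]; unfold markB
    rw [List.getElem?_map, List.getElem?_range hp]
    simp [hpred]
  have hsel1 : ∀ t, sel1 B t = P.getD (t - 1) 0 + 1 := by
    intro t; unfold sel1 sel; rw [hBfil]
  rw [hselS i, hsel1, hselD]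
  simp only [Nat.add_sub_cancel]
  rw [hfinal]

end RS
end

section
/- Let f be a strictly increasing character-preserving embedding of S₂ into S₁, and let B be the bitvector of length |S₁| with B[i] = 1 iff i ∉ im(f). Then for every character a and every position j of S₂: rank_a(S₂, j) ≤ rank_a(S₁, f(j)), and moreover rank_a(S₁, f(j)) − rank_a(S₂, j) equals the number of occurrences of a among the positions i ≤ f(j) with B[i] = 1. -/
namespace RS

variable {α : Type*} [DecidableEq α]

lemma rank_eq_countP (a : α) (S : List α) (i : ℕ) :
    rank a S i = (List.range i).countP (fun p => decide (S[p]? = some a)) := by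
  induction i with
  | zero => simp [rank]
  | succ n ih =>
    rw [rank, List.take_succ, List.count_append, List.range_succ, List.countP_append]
    rw [rank] at ih
    rw [ih]
    congr 1
    cases h : S[n]? with
    | none => simp [h]
    | some b =>
      by_cases hb : b = a <;> simp [h, hb, List.count_singleton, List.countP_cons]

lemma countP_range_add (P : ℕ → Bool) (x y : ℕ) :
    (List.range (x + y)).countP P =
      (List.range x).countP P + (List.range y).countP (fun t => P (x + t)) := by
  rw [List.range_add, List.countP_append, List.countP_map]
  rfl

theorem rank_le_of_emb (S₁ S₂ : List α) (f : ℕ → ℕ) (hf : Emb S₂ S₁ f)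
    (a : α) (j : ℕ) (hj1 : 1 ≤ j) (hj2 : j ≤ S₂.length) :
    rank a S₂ j ≤ rank a S₁ (f j) ∧
    rank a S₁ (f j) - rank a S₂ j =
      (List.range (f j)).countP
        (fun p => decide ((markB S₁.length S₂.length f)[p]? = some true ∧
          S₁[p]? = some a)) := by
  obtain ⟨hbd, hmono, hchar⟩ := hf
  set n := S₁.length with hn
  set m := S₂.length with hm
  have hmono' : ∀ k l, 1 ≤ k → k ≤ l → l ≤ m → f k ≤ f l := by
    intro k l hk hkl hl
    rcases eq_or_lt_of_le hkl with rfl | h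
    · exact le_refl _
    · exact le_of_lt (hmono k l hk h hl)
  set P : ℕ → Bool :=
    fun p => decide ((markB n m f)[p]? = some true ∧ S₁[p]? = some a) with hP
  have hmB : ∀ p, p < n → (markB n m f)[p]? = some (!inIm m f (p+1)) := by
    intro p hp
    simp [markB, List.getElem?_map, List.getElem?_range hp]
  have key : ∀ j, j ≤ m →
      rank a S₁ (if j = 0 then 0 else f j) =
        rank a S₂ j + (List.range (if j = 0 then 0 else f j)).countP P := by
    intro j
    induction j with
    | zero => intro _; simp [rank]
    | succ j ih =>
      intro hjm
      have ihj := ih (by omega)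
      set Fj := (if j = 0 then 0 else f j) with hFj
      have hbj : 1 ≤ f (j+1) ∧ f (j+1) ≤ n := hbd (j+1) (by omega) hjm
      have hFje : j ≠ 0 → Fj = f j := by intro h; simp [hFj, h]
      have hlt : Fj < f (j+1) := by
        rcases Nat.eq_zero_or_pos j with rfl | hj
        · simp [hFj]; exact hbj.1
        · rw [hFje (by omega)]
          exact hmono j (j+1) hj (by omega) hjm
      set d := f (j+1) - Fj with hd
      have hFjn : f (j+1) = Fj + d := by omega
      have hd1 : 1 ≤ d := by omega
      have hdd : d = (d-1) + 1 := by omega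
      -- positions strictly between Fj and f (j+1) are not in the image
      have hnot : ∀ p, Fj < p + 1 → p + 1 < f (j+1) → inIm m f (p+1) = false := by
        intro p h1 h2
        rw [inIm, List.any_eq_false]
        intro t ht
        simp only [List.mem_range] at ht
        simp only [beq_iff_eq]
        intro heq
        have htj : t + 1 ≤ j := by
          by_contra hc
          have : f (j+1) ≤ f (t+1) := hmono' (j+1) (t+1) (by omega) (by omega) (by omega)
          omega
        rcases Nat.eq_zero_or_pos j with rfl | hj
        · omega
        · have h3 : f (t+1) ≤ f j := hmono' (t+1) j (by omega) htj (by omega)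
          have h4 : Fj = f j := hFje (by omega)
          omega
      have hin : inIm m f (f (j+1)) = true := by
        rw [inIm, List.any_eq_true]
        exact ⟨j, List.mem_range.mpr (by omega), by simp⟩
      -- decompose the countP's
      have hsplitQ :
          (List.range (f (j+1))).countP (fun p => decide (S₁[p]? = some a)) =
            (List.range Fj).countP (fun p => decide (S₁[p]? = some a)) +
            ((List.range (d-1)).countP (fun t => decide (S₁[Fj + t]? = some a)) +
              if (decide (S₁[Fj + (d-1)]? = some a)) = true then 1 else 0) := by
        rw [hFjn, countP_range_add]
        congr 1
        rw [hdd, List.range_succ, List.countP_append]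
        simp [List.countP_cons]
      have hsplitP :
          (List.range (f (j+1))).countP P =
            (List.range Fj).countP P +
            ((List.range (d-1)).countP (fun t => P (Fj + t)) +
              if P (Fj + (d-1)) = true then 1 else 0) := by
        rw [hFjn, countP_range_add]
        congr 1
        rw [hdd, List.range_succ, List.countP_append]
        simp [List.countP_cons]
      -- middle parts agree
      have hmid : (List.range (d-1)).countP (fun t => P (Fj + t)) =
          (List.range (d-1)).countP (fun t => decide (S₁[Fj + t]? = some a)) := by
        apply List.countP_congr
        intro t ht
        simp only [List.mem_range] at ht
        have hpn : Fj + t < n := by omega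
        have hni : inIm m f (Fj + t + 1) = false := hnot (Fj + t) (by omega) (by omega)
        simp [hP, hmB (Fj + t) hpn, hni]
      -- end elements
      have hpend : Fj + (d-1) = f (j+1) - 1 := by omega
      have hendP : P (Fj + (d-1)) = false := by
        have hpn : Fj + (d-1) < n := by omega
        have : Fj + (d-1) + 1 = f (j+1) := by omega
        simp [hP, hmB _ hpn, this, hin]
      have hendQ : S₁[Fj + (d-1)]? = S₂[j]? := by
        rw [hpend]
        have := hchar (j+1) (by omega) hjm
        simpa using this.symm
      -- rank of S₂ step
      have hS2 : rank a S₂ (j+1) =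
          rank a S₂ j + (if (decide (S₂[j]? = some a)) = true then 1 else 0) := by
        rw [rank, List.take_succ, List.count_append, rank]
        congr 1
        cases h : S₂[j]? with
        | none => simp [h]
        | some b => by_cases hb : b = a <;> simp [h, hb, List.count_singleton]
      rw [if_neg (by omega : ¬ j + 1 = 0)]
      have e1 : rank a S₁ (f (j+1)) =
          (List.range Fj).countP (fun p => decide (S₁[p]? = some a)) +
          ((List.range (d-1)).countP (fun t => decide (S₁[Fj + t]? = some a)) +
            (if (decide (S₁[Fj + (d-1)]? = some a)) = true then 1 else 0)) := by
        rw [rank_eq_countP, hsplitQ]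
      have e2 : (List.range (f (j+1))).countP P =
          (List.range Fj).countP P +
          (List.range (d-1)).countP (fun t => decide (S₁[Fj + t]? = some a)) := by
        rw [hsplitP, hmid, hendP]; simp
      have e3 : (if (decide (S₁[Fj + (d-1)]? = some a)) = true then 1 else 0) =
          (if (decide (S₂[j]? = some a)) = true then 1 else 0) := by rw [hendQ]
      rw [rank_eq_countP a S₁ Fj] at ihj
      rw [e1, e2, hS2, e3, ihj]
      omega
  have hkey := key j hj2
  rw [if_neg (by omega : ¬ j = 0)] at hkey
  set c := (List.range (f j)).countP P with hc
  constructor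
  · omega
  · omega

end RS
end

section
/- For any string S over a finite alphabet, the function LF defined by LF(i) = C[S[i]] + rank_{S[i]}(S, i), where C[c] is the number of positions j of S with S[j] < c (for a fixed total order on the alphabet), is a bijection (permutation) of {1, …, |S|}. -/
namespace RS

variable {α : Type*} [DecidableEq α]

section LFlemmas
variable {β : Type*} [LinearOrder β] [Inhabited β]
set_option linter.unusedSectionVars false

lemma count_lt_add (S : List β) (c : β) :
    S.countP (fun y => decide (y < c)) + S.count c = S.countP (fun y => decide (y ≤ c)) := by
  induction S with
  | nil => simp
  | cons a t ih =>
    simp only [List.countP_cons, List.count_cons]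
    rcases lt_trichotomy a c with h | h | h <;>
      simp [h, le_of_lt, not_le_of_gt, ne_of_gt, ne_of_lt, h.le, h.not_gt] <;> omega

lemma rank_mono (a : β) (S : List β) {i j : ℕ} (h : i ≤ j) : rank a S i ≤ rank a S j := by
  have : S.take i = (S.take j).take i := by rw [List.take_take, Nat.min_eq_left h]
  rw [rank, rank, this]
  exact (List.take_sublist _ _).count_le a

lemma rank_le_count (a : β) (S : List β) (i : ℕ) : rank a S i ≤ S.count a :=
  (List.take_sublist _ _).count_le a

lemma rank_succ_self (S : List β) {i : ℕ} (hi : 1 ≤ i) (h : i - 1 < S.length) :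
    rank (S[i-1]) S i = rank (S[i-1]) S (i - 1) + 1 := by
  obtain ⟨k, rfl⟩ : ∃ k, i = k + 1 := ⟨i - 1, by omega⟩
  simp only [Nat.add_sub_cancel] at h ⊢
  rw [rank, rank, List.take_succ, List.getElem?_eq_getElem h, Option.toList_some,
    List.count_append]
  simp [List.count_singleton]

end LFlemmas

theorem lf_bijOn {β : Type*} [LinearOrder β] [Inhabited β] (S : List β) :
    Set.BijOn
      (fun i : ℕ =>
        S.countP (fun y => decide (y < S.getD (i - 1) default)) +
          rank (S.getD (i - 1) default) S i)
      (Set.Icc 1 S.length) (Set.Icc 1 S.length) := by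
  set n := S.length
  have key : ∀ i ∈ Set.Icc 1 n, ∀ j ∈ Set.Icc 1 n, i < j →
      (fun i : ℕ => S.countP (fun y => decide (y < S.getD (i - 1) default)) +
        rank (S.getD (i - 1) default) S i) i ≠
      (fun i : ℕ => S.countP (fun y => decide (y < S.getD (i - 1) default)) +
        rank (S.getD (i - 1) default) S i) j := by
    intro i hi j hj hij
    simp only [Set.mem_Icc] at hi hj
    show S.countP (fun y => decide (y < S.getD (i - 1) default)) +
        rank (S.getD (i - 1) default) S i ≠
      S.countP (fun y => decide (y < S.getD (j - 1) default)) +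
        rank (S.getD (j - 1) default) S j
    have hil : i - 1 < n := by omega
    have hjl : j - 1 < n := by omega
    set c := S.getD (i - 1) default with hc
    set d := S.getD (j - 1) default with hd
    have hcg : S[i-1] = c := by rw [hc, List.getD_eq_getElem S default hil]
    have hdg : S[j-1] = d := by rw [hd, List.getD_eq_getElem S default hjl]
    have hrc : rank c S i = rank c S (i - 1) + 1 := by rw [← hcg]; exact rank_succ_self S hi.1 hil
    have hrd : rank d S j = rank d S (j - 1) + 1 := by rw [← hdg]; exact rank_succ_self S hj.1 hjl
    rcases lt_trichotomy c d with h | h | h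
    · -- c < d : LF i ≤ countP (≤ c) ≤ countP (< d) < LF j
      have h1 : rank c S i ≤ S.count c := rank_le_count c S i
      have h2 : S.countP (fun y => decide (y < c)) + S.count c
          = S.countP (fun y => decide (y ≤ c)) := count_lt_add S c
      have h3 : S.countP (fun y => decide (y ≤ c)) ≤ S.countP (fun y => decide (y < d)) :=
        List.countP_mono_left (by intro x _ hx; simp at hx ⊢; exact lt_of_le_of_lt hx h)
      omega
    · -- c = d : ranks differ since i < j
      rw [← h] at hrd ⊢
      have : rank c S i ≤ rank c S (j - 1) := rank_mono c S (by omega)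
      omega
    · have h1 : rank d S j ≤ S.count d := rank_le_count d S j
      have h2 : S.countP (fun y => decide (y < d)) + S.count d
          = S.countP (fun y => decide (y ≤ d)) := count_lt_add S d
      have h3 : S.countP (fun y => decide (y ≤ d)) ≤ S.countP (fun y => decide (y < c)) :=
        List.countP_mono_left (by intro x _ hx; simp at hx ⊢; exact lt_of_le_of_lt hx h)
      omega
  have maps : Set.MapsTo (fun i : ℕ =>
      S.countP (fun y => decide (y < S.getD (i - 1) default)) +
        rank (S.getD (i - 1) default) S i) (Set.Icc 1 n) (Set.Icc 1 n) := by
    intro i hi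
    simp only [Set.mem_Icc] at hi ⊢
    have hil : i - 1 < n := by omega
    set c := S.getD (i - 1) default with hc
    have hcg : S[i-1] = c := by rw [hc, List.getD_eq_getElem S default hil]
    have hrc : rank c S i = rank c S (i - 1) + 1 := by rw [← hcg]; exact rank_succ_self S hi.1 hil
    have h1 : rank c S i ≤ S.count c := rank_le_count c S i
    have h2 : S.countP (fun y => decide (y < c)) + S.count c
        = S.countP (fun y => decide (y ≤ c)) := count_lt_add S c
    have h4 : S.countP (fun y => decide (y ≤ c)) ≤ n := List.countP_le_length
    constructor
    · omega
    · omega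
  refine (Set.Finite.injOn_iff_bijOn_of_mapsTo (Set.finite_Icc _ _) maps).mp ?_
  intro i hi j hj heq
  by_contra hne
  rcases Nat.lt_or_ge i j with h | h
  · exact key i hi j hj h heq
  · exact key j hj i hi (by omega) heq.symm

end RS
end
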